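/- Let α ∈ (0,1), let c, τ > 0, and set η_k = c/k^α for k ≥ 1. Let (s_k)_{k≥1} be a sequence of nonnegative real numbers satisfying s_{k+1} ≤ (1 − η_k) s_k + τ η_k² for all k ≥ 1. Then s_k = O(k^{−α}), i.e., there exist a constant C > 0 and an index K such that s_k ≤ C k^{−α} for all k ≥ K. -/

import Mathlib

open Real Filter

lemma diff_le_aux (α : ℝ) (hα : 0 < α) (hα1 : α ≤ 1) (x : ℝ) (hx : 1 ≤ x) :
    x ^ (-α) - (x + 1) ^ (-α) ≤ x ^ (-α) / x := by
  have hx0 : (0:ℝ) < x := lt_of_lt_of_le one_pos hx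
  have hx1 : (0:ℝ) < x + 1 := by linarith
  have hratio : x / (x + 1) ≤ (x / (x + 1)) ^ α := by
    have := Real.rpow_le_rpow_of_exponent_ge (div_pos hx0 hx1)
      (by rw [div_le_one hx1]; linarith) hα1
    simpa using this
  have hdiv : (x / (x + 1)) ^ α = x ^ α / (x + 1) ^ α :=
    Real.div_rpow hx0.le hx1.le α
  have hxa : (0:ℝ) < x ^ α := Real.rpow_pos_of_pos hx0 α
  have hxa1 : (0:ℝ) < (x + 1) ^ α := Real.rpow_pos_of_pos hx1 α
  have hneg : x ^ (-α) = (x ^ α)⁻¹ := Real.rpow_neg hx0.le α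
  have hneg1 : (x + 1) ^ (-α) = ((x + 1) ^ α)⁻¹ := Real.rpow_neg hx1.le α
  -- key: (x+1)^(-α) ≥ x^(-α) * (x/(x+1))
  have key : x ^ (-α) * (x / (x + 1)) ≤ (x + 1) ^ (-α) := by
    rw [hneg, hneg1]
    rw [hdiv] at hratio
    calc (x ^ α)⁻¹ * (x / (x + 1)) ≤ (x ^ α)⁻¹ * (x ^ α / (x + 1) ^ α) := by
          apply mul_le_mul_of_nonneg_left hratio (by positivity)
      _ = ((x + 1) ^ α)⁻¹ := by field_simp
  have h1 : x ^ (-α) - (x + 1) ^ (-α) ≤ x ^ (-α) * (1 - x / (x + 1)) := by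
    nlinarith [key]
  have h2 : 1 - x / (x + 1) ≤ 1 / x := by
    have e : 1 - x / (x + 1) = 1 / (x + 1) := by field_simp; ring
    rw [e]
    exact one_div_le_one_div_of_le hx0 (by linarith)
  have hxna : (0:ℝ) < x ^ (-α) := Real.rpow_pos_of_pos hx0 _
  calc x ^ (-α) - (x + 1) ^ (-α) ≤ x ^ (-α) * (1 - x / (x + 1)) := h1
    _ ≤ x ^ (-α) * (1 / x) := mul_le_mul_of_nonneg_left h2 hxna.le
    _ = x ^ (-α) / x := by ring

lemma step_ineq (C c τ v w : ℝ) (hC : 0 < C)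
    (h1 : C * (v - w) ≤ C * (v * (c / 2 * v)))
    (h2 : τ * c ^ 2 ≤ C / 2 * c) :
    (1 - c * v) * (C * v) + τ * (c * v) ^ 2 ≤ C * w := by
  nlinarith [mul_le_mul_of_nonneg_right h2 (sq_nonneg v)]

theorem stmt2 (α c τ : ℝ) (hα : 0 < α) (hα1 : α < 1) (hc : 0 < c) (hτ : 0 < τ)
    (η : ℕ → ℝ) (hη : ∀ k : ℕ, 1 ≤ k → η k = c / (k : ℝ) ^ α)
    (s : ℕ → ℝ) (hs : ∀ k : ℕ, 1 ≤ k → 0 ≤ s k)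
    (hrec : ∀ k : ℕ, 1 ≤ k → s (k + 1) ≤ (1 - η k) * s k + τ * (η k) ^ 2) :
    ∃ C : ℝ, 0 < C ∧ ∃ K : ℕ, ∀ k : ℕ, K ≤ k → s k ≤ C * (k : ℝ) ^ (-α) := by
  -- eventual smallness conditions
  have t1 : Tendsto (fun k : ℕ => (k : ℝ) ^ (-α)) atTop (nhds 0) :=
    (tendsto_rpow_neg_atTop hα).comp tendsto_natCast_atTop_atTop
  have t2 : Tendsto (fun k : ℕ => (k : ℝ) ^ (α - 1)) atTop (nhds 0) := by
    have : Tendsto (fun x : ℝ => x ^ (-(1 - α))) atTop (nhds 0) :=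
      tendsto_rpow_neg_atTop (by linarith)
    have := this.comp (tendsto_natCast_atTop_atTop (R := ℝ))
    simpa [neg_sub, Function.comp_def] using this
  have hA : ∀ᶠ k : ℕ in atTop, (k : ℝ) ^ (-α) ≤ 1 / c :=
    t1.eventually (eventually_le_nhds (by positivity))
  have hB : ∀ᶠ k : ℕ in atTop, (k : ℝ) ^ (α - 1) ≤ c / 2 :=
    t2.eventually (eventually_le_nhds (by positivity))
  obtain ⟨K₀, hK₀⟩ := eventually_atTop.mp (hA.and hB)
  set K : ℕ := max K₀ 1 with hK
  have hK1 : 1 ≤ K := le_max_right _ _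
  have hKcond : ∀ k : ℕ, K ≤ k → (k : ℝ) ^ (-α) ≤ 1 / c ∧ (k : ℝ) ^ (α - 1) ≤ c / 2 :=
    fun k hk => hK₀ k (le_trans (le_max_left _ _) hk)
  set C : ℝ := max (2 * τ * c) (s K * (K : ℝ) ^ α) + 1 with hC
  have hKpos : (0:ℝ) < (K : ℝ) := by exact_mod_cast hK1
  have hCpos : 0 < C := by
    have : (0:ℝ) ≤ max (2 * τ * c) (s K * (K : ℝ) ^ α) :=
      le_trans (by positivity) (le_max_left _ _)
    linarith
  refine ⟨C, hCpos, K, ?_⟩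
  have hC2 : 2 * τ * c ≤ C := le_trans (le_max_left _ _) (by linarith)
  -- base case
  have base : s K ≤ C * (K : ℝ) ^ (-α) := by
    have h1 : s K * (K : ℝ) ^ α ≤ C := le_trans (le_max_right _ _) (by linarith)
    have hKa : (0:ℝ) < (K : ℝ) ^ α := Real.rpow_pos_of_pos hKpos α
    have := mul_le_mul_of_nonneg_right h1 (le_of_lt (Real.rpow_pos_of_pos hKpos (-α)))
    calc s K = s K * (K : ℝ) ^ α * (K : ℝ) ^ (-α) := by
          rw [mul_assoc, ← Real.rpow_add hKpos]; simp
      _ ≤ C * (K : ℝ) ^ (-α) := this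
  -- inductive step
  have step : ∀ k : ℕ, K ≤ k → s k ≤ C * (k : ℝ) ^ (-α) →
      s (k + 1) ≤ C * ((k : ℝ) + 1) ^ (-α) := by
    intro k hk ih
    have hk1 : 1 ≤ k := le_trans hK1 hk
    have hx1 : (1:ℝ) ≤ (k : ℝ) := by exact_mod_cast hk1
    have hx0 : (0:ℝ) < (k : ℝ) := by linarith
    obtain ⟨hAk, hBk⟩ := hKcond k hk
    set x : ℝ := (k : ℝ)
    have hηk : η k = c * x ^ (-α) := by
      rw [hη k hk1, Real.rpow_neg hx0.le, div_eq_mul_inv]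
    have hxna : (0:ℝ) < x ^ (-α) := Real.rpow_pos_of_pos hx0 _
    have hη01 : c * x ^ (-α) ≤ 1 := by
      have := mul_le_mul_of_nonneg_left hAk hc.le
      rwa [mul_one_div, div_self hc.ne'] at this
    have hrec' := hrec k hk1
    rw [hηk] at hrec'
    have hmul : (1 - c * x ^ (-α)) * s k ≤ (1 - c * x ^ (-α)) * (C * x ^ (-α)) :=
      mul_le_mul_of_nonneg_left ih (by linarith)
    have hsk1 : s (k + 1) ≤ (1 - c * x ^ (-α)) * (C * x ^ (-α)) + τ * (c * x ^ (-α)) ^ 2 := by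
      linarith
    -- now show RHS ≤ C * (x+1)^(-α)
    have hdiff : x ^ (-α) - (x + 1) ^ (-α) ≤ x ^ (-α) / x :=
      diff_le_aux α hα hα1.le x hx1
    have hxinv : 1 / x ≤ (c / 2) * x ^ (-α) := by
      have : x ^ (α - 1) * x ^ (-α) ≤ (c / 2) * x ^ (-α) :=
        mul_le_mul_of_nonneg_right hBk hxna.le
      rwa [← Real.rpow_add hx0, show α - 1 + -α = -1 by ring, Real.rpow_neg_one,
        ← one_div] at this
    have hτc : τ * c ^ 2 ≤ (C / 2) * c := by nlinarith
    have hgoal : (1 - c * x ^ (-α)) * (C * x ^ (-α)) + τ * (c * x ^ (-α)) ^ 2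
        ≤ C * (x + 1) ^ (-α) := by
      have e1 : C * (x ^ (-α) - (x + 1) ^ (-α)) ≤ C * (x ^ (-α) / x) :=
        mul_le_mul_of_nonneg_left hdiff hCpos.le
      have e2 : x ^ (-α) / x = x ^ (-α) * (1 / x) := by ring
      have e3 : x ^ (-α) * (1 / x) ≤ x ^ (-α) * ((c / 2) * x ^ (-α)) :=
        mul_le_mul_of_nonneg_left hxinv hxna.le
      have e4 : C * (x ^ (-α) - (x + 1) ^ (-α)) ≤ C * (x ^ (-α) * (c / 2 * x ^ (-α))) := by
        calc C * (x ^ (-α) - (x + 1) ^ (-α)) ≤ C * (x ^ (-α) / x) := e1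
          _ = C * (x ^ (-α) * (1 / x)) := by rw [e2]
          _ ≤ C * (x ^ (-α) * (c / 2 * x ^ (-α))) :=
              mul_le_mul_of_nonneg_left e3 hCpos.le
      have e5 : τ * c ^ 2 * (x ^ (-α)) ^ 2 ≤ C / 2 * c * (x ^ (-α)) ^ 2 :=
        mul_le_mul_of_nonneg_right hτc (sq_nonneg _)
      exact step_ineq C c τ (x ^ (-α)) ((x + 1) ^ (-α)) hCpos
        (by rw [mul_comm (x ^ (-α)) (c / 2 * x ^ (-α))] at e4 ⊢; linarith [e4])
        hτc
    have hcast : ((k + 1 : ℕ) : ℝ) = x + 1 := by push_cast; ring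
    linarith [hsk1, hgoal]
  -- conclude by induction
  intro k hk
  obtain ⟨n, rfl⟩ := Nat.exists_eq_add_of_le hk
  induction n with
  | zero => simpa using base
  | succ n ih =>
    have hk' : K ≤ K + n := Nat.le_add_right _ _
    have := step (K + n) hk' (ih (Nat.le_add_right _ _))
    have hcast : ((K + (n + 1) : ℕ) : ℝ) = ((K + n : ℕ) : ℝ) + 1 := by push_cast; ring
    rw [show K + (n + 1) = (K + n) + 1 from rfl]
    rw [show ((K + n + 1 : ℕ) : ℝ) = ((K + n : ℕ) : ℝ) + 1 by push_cast; ring]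
    exact this
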